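/- In E_2(2) = Int(k[x_1,x_2]) with char k = 2, deg x_1 = 1/2, deg x_2 = 3/4, the elements u = x_1^2, v = x_1 x_2^2, w = x_2^4 generate E_2(2), they have degrees 1, 2, 3 respectively, and E_2(2) is isomorphic as a graded algebra to k[U,V,W]/(UW + V^2) with deg U = 1, deg V = 2, deg W = 3. -/

import Mathlib

open MvPolynomial

/-- `E_2(2)`: the span of the monomials `x_1^a x_2^b` of integer degree, where
`deg x_1 = 1/2`, `deg x_2 = 3/4`. -/
noncomputable def E22 (k : Type*) [Field k] : Submodule k (MvPolynomial (Fin 2) k) :=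
  Submodule.span k {m : MvPolynomial (Fin 2) k | ∃ a b : ℕ,
    m = X 0 ^ a * X 1 ^ b ∧ ∃ z : ℤ, (a : ℚ) * (1 / 2) + (b : ℚ) * (3 / 4) = z}

namespace Stmt18Aux

variable {k : Type*} [Field k]

/-- Exponent map on monomials induced by `U ↦ x₀², V ↦ x₀x₁², W ↦ x₁⁴`. -/
noncomputable def gexp (d : Fin 3 →₀ ℕ) : Fin 2 →₀ ℕ :=
  Finsupp.single 0 (2 * d 0 + d 1) + Finsupp.single 1 (2 * d 1 + 4 * d 2)

lemma mon2 (A B : ℕ) (c : k) :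
    (monomial (Finsupp.single 0 A + Finsupp.single 1 B) c : MvPolynomial (Fin 2) k)
      = C c * X 0 ^ A * X 1 ^ B := by
  rw [X_pow_eq_monomial, X_pow_eq_monomial, C_apply, monomial_mul, monomial_mul]
  simp

lemma fin3_eq (d : Fin 3 →₀ ℕ) :
    d = Finsupp.single 0 (d 0) + Finsupp.single 1 (d 1) + Finsupp.single 2 (d 2) := by
  ext i
  fin_cases i <;> simp [Finsupp.single_apply]

lemma mon3 (d : Fin 3 →₀ ℕ) (c : k) :
    (monomial d c : MvPolynomial (Fin 3) k)
      = C c * X 0 ^ d 0 * X 1 ^ d 1 * X 2 ^ d 2 := by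
  conv_lhs => rw [fin3_eq d]
  rw [X_pow_eq_monomial, X_pow_eq_monomial, X_pow_eq_monomial, C_apply,
    monomial_mul, monomial_mul, monomial_mul]
  simp [add_assoc]

lemma psi_monomial (d : Fin 3 →₀ ℕ) (c : k) :
    (aeval ![(X 0 : MvPolynomial (Fin 2) k) ^ 2, X 0 * X 1 ^ 2, X 1 ^ 4])
        (monomial d c) = monomial (gexp d) c := by
  rw [mon3, map_mul, map_mul, map_mul, map_pow, map_pow, map_pow, aeval_X, aeval_X, aeval_X,
    aeval_C, gexp, mon2]
  simp only [Matrix.cons_val_zero, Matrix.cons_val_one, Matrix.head_cons, algebraMap_eq]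
  rw [show ((![(X 0 : MvPolynomial (Fin 2) k) ^ 2, X 0 * X 1 ^ 2, X 1 ^ 4]) 2) = X 1 ^ 4 from rfl]
  ring

lemma psi_as_sum (p : MvPolynomial (Fin 3) k) :
    (aeval ![(X 0 : MvPolynomial (Fin 2) k) ^ 2, X 0 * X 1 ^ 2, X 1 ^ 4]) p
      = ∑ d ∈ p.support, monomial (gexp d) (coeff d p) := by
  conv_lhs => rw [as_sum p]
  rw [map_sum]
  exact Finset.sum_congr rfl fun d _ => psi_monomial d _

lemma gexp_inj {d e : Fin 3 →₀ ℕ} (hd : d 1 ≤ 1) (he : e 1 ≤ 1) (h : gexp d = gexp e) :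
    d = e := by
  have h0 := DFunLike.congr_fun h 0
  have h1 := DFunLike.congr_fun h 1
  simp only [gexp, Finsupp.add_apply, Finsupp.single_apply] at h0 h1
  norm_num at h0 h1
  ext i
  fin_cases i
  · show d 0 = e 0; omega
  · show d 1 = e 1; omega
  · show d 2 = e 2; omega

/-- Injectivity on polynomials with `V`-degree ≤ 1. -/
lemma lemA (q : MvPolynomial (Fin 3) k) (hq : ∀ d ∈ q.support, d 1 ≤ 1)
    (h : (aeval ![(X 0 : MvPolynomial (Fin 2) k) ^ 2, X 0 * X 1 ^ 2, X 1 ^ 4]) q = 0) :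
    q = 0 := by
  rw [psi_as_sum] at h
  ext d
  rw [coeff_zero]
  by_cases hd : d ∈ q.support
  · have h3 := congrArg (coeff (gexp d)) h
    rw [coeff_zero, coeff_sum] at h3
    simp only [coeff_monomial] at h3
    rw [Finset.sum_eq_single d (fun b hb hbd => if_neg (fun hgb =>
        hbd (gexp_inj (hq b hb) (hq d hd) hgb))) (fun hd' => absurd hd hd'), if_pos rfl] at h3
    exact h3
  · exact notMem_support_iff.mp hd

/-- Reduction modulo the relation: every polynomial is congruent to one of `V`-degree ≤ 1. -/
lemma lemB [CharP k 2] (p : MvPolynomial (Fin 3) k) :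
    ∃ q, p - q ∈ Ideal.span {(X 0 : MvPolynomial (Fin 3) k) * X 2 + X 1 ^ 2}
      ∧ ∀ d ∈ q.support, d 1 ≤ 1 := by
  have hs : (X 0 : MvPolynomial (Fin 3) k) * X 2 + X 1 ^ 2
      = X 1 ^ 2 - X 0 * X 2 := by
    rw [CharTwo.sub_eq_add]; ring
  induction p using MvPolynomial.induction_on' with
  | monomial d c =>
    set m := d 1 / 2 with hm
    set e := d 1 % 2 with he
    set ρ : Fin 3 →₀ ℕ :=
      Finsupp.single 0 (d 0 + m) + Finsupp.single 1 e + Finsupp.single 2 (d 2 + m) with hρ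
    have hρ0 : ρ 0 = d 0 + m := by simp [hρ, Finsupp.single_apply]
    have hρ1 : ρ 1 = e := by simp [hρ, Finsupp.single_apply]
    have hρ2 : ρ 2 = d 2 + m := by simp [hρ, Finsupp.single_apply]
    refine ⟨monomial ρ c, ?_, ?_⟩
    · rw [Ideal.mem_span_singleton, hs]
      have key : (monomial d c : MvPolynomial (Fin 3) k) - monomial ρ c
          = (C c * X 0 ^ d 0 * X 2 ^ d 2 * X 1 ^ e) * ((X 1 ^ 2) ^ m - (X 0 * X 2) ^ m) := by
        rw [mon3, mon3, hρ0, hρ1, hρ2]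
        rw [show d 1 = 2 * m + e by omega]
        ring
      rw [key]
      exact Dvd.dvd.mul_left (sub_dvd_pow_sub_pow _ _ m) _
    · intro d' hd'
      have := support_monomial_subset hd'
      rw [Finset.mem_singleton] at this
      rw [this, hρ1]
      omega
  | add p1 p2 ih1 ih2 =>
    obtain ⟨q1, hq1, hq1'⟩ := ih1
    obtain ⟨q2, hq2, hq2'⟩ := ih2
    refine ⟨q1 + q2, ?_, ?_⟩
    · have h : p1 + p2 - (q1 + q2) = (p1 - q1) + (p2 - q2) := by ring
      rw [h]
      exact Ideal.add_mem _ hq1 hq2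
    · intro d hd
      rcases Finset.mem_union.mp (Finsupp.support_add hd) with h | h
      · exact hq1' d h
      · exact hq2' d h

lemma psi_rel [CharP k 2] :
    (aeval ![(X 0 : MvPolynomial (Fin 2) k) ^ 2, X 0 * X 1 ^ 2, X 1 ^ 4])
      ((X 0 : MvPolynomial (Fin 3) k) * X 2 + X 1 ^ 2) = 0 := by
  rw [map_add, map_mul, map_pow, aeval_X, aeval_X, aeval_X]
  simp only [Matrix.cons_val_zero, Matrix.cons_val_one, Matrix.head_cons]
  rw [show ((![(X 0 : MvPolynomial (Fin 2) k) ^ 2, X 0 * X 1 ^ 2, X 1 ^ 4]) 2) = X 1 ^ 4 from rfl]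
  rw [show ((X 0 : MvPolynomial (Fin 2) k) * X 1 ^ 2) ^ 2 = X 0 ^ 2 * X 1 ^ 4 by ring]
  exact CharTwo.add_self_eq_zero _

lemma gen_mem_E22 (d : Fin 3 →₀ ℕ) (c : k) :
    (monomial (gexp d) c : MvPolynomial (Fin 2) k) ∈ E22 k := by
  have h1 : (monomial (gexp d) c : MvPolynomial (Fin 2) k)
      = c • (X 0 ^ (2 * d 0 + d 1) * X 1 ^ (2 * d 1 + 4 * d 2)) := by
    rw [gexp, mon2, smul_eq_C_mul]; ring
  rw [h1]
  refine Submodule.smul_mem _ _ (Submodule.subset_span ?_)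
  exact ⟨2 * d 0 + d 1, 2 * d 1 + 4 * d 2, rfl,
    ⟨(d 0 : ℤ) + 2 * d 1 + 3 * d 2, by push_cast; ring⟩⟩

end Stmt18Aux

open Stmt18Aux in
/-- Over a field `k` of characteristic 2: the elements `u = x_1^2`, `v = x_1 x_2^2`,
`w = x_2^4` have (weighted) degrees `1, 2, 3`, they generate `E_2(2)` (the image of
`k[U,V,W] → k[x_1,x_2]`, `U ↦ u, V ↦ v, W ↦ w`, is exactly `E_2(2)`), and the
kernel of this map is generated by `UW + V^2`; that is,
`E_2(2) ≅ k[U,V,W]/(UW + V^2)`. -/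
theorem stmt18 (k : Type*) [Field k] [CharP k 2] :
    weightedTotalDegree ![(1 : ℚ≥0) / 2, 3 / 4] ((X 0 : MvPolynomial (Fin 2) k) ^ 2) = 1 ∧
    weightedTotalDegree ![(1 : ℚ≥0) / 2, 3 / 4] ((X 0 : MvPolynomial (Fin 2) k) * X 1 ^ 2) = 2 ∧
    weightedTotalDegree ![(1 : ℚ≥0) / 2, 3 / 4] ((X 1 : MvPolynomial (Fin 2) k) ^ 4) = 3 ∧
    Subalgebra.toSubmodule
      (MvPolynomial.aeval
        ![(X 0 : MvPolynomial (Fin 2) k) ^ 2, X 0 * X 1 ^ 2, X 1 ^ 4] :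
        MvPolynomial (Fin 3) k →ₐ[k] MvPolynomial (Fin 2) k).range = E22 k ∧
    RingHom.ker (MvPolynomial.aeval
        ![(X 0 : MvPolynomial (Fin 2) k) ^ 2, X 0 * X 1 ^ 2, X 1 ^ 4] :
        MvPolynomial (Fin 3) k →ₐ[k] MvPolynomial (Fin 2) k).toRingHom
      = Ideal.span {(X 0 : MvPolynomial (Fin 3) k) * X 2 + X 1 ^ 2} := by
  classical
  refine ⟨?_, ?_, ?_, ?_, ?_⟩
  · rw [weightedTotalDegree, support_X_pow]
    simp [Finsupp.weight_apply, Finsupp.sum_single_index]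
  · rw [show (X 0 : MvPolynomial (Fin 2) k) * X 1 ^ 2
        = monomial (Finsupp.single 0 1 + Finsupp.single 1 2) 1 by
      rw [X, X_pow_eq_monomial, monomial_mul, one_mul]]
    rw [weightedTotalDegree, support_monomial, if_neg one_ne_zero]
    rw [Finset.sup_singleton, map_add]
    simp [Finsupp.weight_apply, Finsupp.sum_single_index]
    apply NNRat.coe_injective; push_cast; norm_num
  · rw [weightedTotalDegree, support_X_pow]
    simp [Finsupp.weight_apply, Finsupp.sum_single_index]
    apply NNRat.coe_injective; push_cast; norm_num
  · refine le_antisymm ?_ ?_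
    · intro x hx
      rw [Subalgebra.mem_toSubmodule, AlgHom.mem_range] at hx
      obtain ⟨p, rfl⟩ := hx
      rw [psi_as_sum]
      exact Submodule.sum_mem _ fun d _ => gen_mem_E22 d _
    · rw [E22]
      apply Submodule.span_le.mpr
      rintro x ⟨a, b, rfl, z, hz⟩
      rw [SetLike.mem_coe, Subalgebra.mem_toSubmodule, AlgHom.mem_range]
      have hz4 : (2 * a + 3 * b : ℚ) = 4 * z := by linarith
      have hz' : (2 * a + 3 * b : ℤ) = 4 * z := by exact_mod_cast hz4
      have hn : ∃ n : ℕ, 2 * a + 3 * b = 4 * n := by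
        refine ⟨z.toNat, ?_⟩
        have : 0 ≤ z := by omega
        omega
      obtain ⟨n, hn⟩ := hn
      set d : Fin 3 →₀ ℕ := Finsupp.single 0 (a / 2) + Finsupp.single 1 (a % 2)
          + Finsupp.single 2 ((b - 2 * (a % 2)) / 4) with hd
      have hd0 : d 0 = a / 2 := by simp [hd, Finsupp.single_apply]
      have hd1 : d 1 = a % 2 := by simp [hd, Finsupp.single_apply]
      have hd2 : d 2 = (b - 2 * (a % 2)) / 4 := by simp [hd, Finsupp.single_apply]
      refine ⟨monomial d 1, ?_⟩
      rw [psi_monomial, gexp, mon2, C_1, one_mul, hd0, hd1, hd2,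
        show 2 * (a / 2) + a % 2 = a by omega,
        show 2 * (a % 2) + 4 * ((b - 2 * (a % 2)) / 4) = b by omega]
  · refine le_antisymm ?_ ?_
    · intro p hp
      rw [RingHom.mem_ker] at hp
      obtain ⟨q, hq, hq'⟩ := lemB p
      have hker : Ideal.span {(X 0 : MvPolynomial (Fin 3) k) * X 2 + X 1 ^ 2}
          ≤ RingHom.ker (MvPolynomial.aeval
            ![(X 0 : MvPolynomial (Fin 2) k) ^ 2, X 0 * X 1 ^ 2, X 1 ^ 4] :
            MvPolynomial (Fin 3) k →ₐ[k] MvPolynomial (Fin 2) k).toRingHom := by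
        rw [Ideal.span_le]
        intro x hx
        rw [Set.mem_singleton_iff] at hx
        rw [SetLike.mem_coe, RingHom.mem_ker, hx]
        exact psi_rel
      have hpq : (aeval ![(X 0 : MvPolynomial (Fin 2) k) ^ 2, X 0 * X 1 ^ 2, X 1 ^ 4])
          (p - q) = 0 := hker hq
      have hψq : (aeval ![(X 0 : MvPolynomial (Fin 2) k) ^ 2, X 0 * X 1 ^ 2, X 1 ^ 4]) q = 0 := by
        rw [map_sub] at hpq
        rw [show (aeval ![(X 0 : MvPolynomial (Fin 2) k) ^ 2, X 0 * X 1 ^ 2, X 1 ^ 4]) p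
          = 0 from hp] at hpq
        rw [zero_sub, neg_eq_zero] at hpq
        exact hpq
      have hq0 : q = 0 := lemA q hq' hψq
      rw [hq0, sub_zero] at hq
      exact hq
    · rw [Ideal.span_le]
      intro x hx
      rw [Set.mem_singleton_iff] at hx
      rw [SetLike.mem_coe, RingHom.mem_ker, hx]
      exact psi_rel
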